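/- (Claim of Remark 1.) Consider the variant update rule in which each regular node i ∈ R updates x_i(k+1) = x_i(k) + Σ_{j∈M_i(k)} a_{ij}(k)(x̂_j(k) − x̂_i(k)) (its own broadcast value x̂_i(k) replacing x_i(k) in the differences), with the same MSR filter, weight conditions, and event-triggered broadcast rule as in Protocol 1. If the directed graph G is (F+1,F+1)-robust, N = |R| ≥ 1, c ≥ 0, and c0 ≤ γ^N·c/(8N), then for all regular nodes i,j ∈ R, for every behavior of the malicious nodes, all initial values, and all admissible weight choices, lim sup_{k→∞} |x_i(k) − x_j(k)| ≤ c. -/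

import Mathlib

open Finset

/- A directed graph on `n` nodes is given by its neighbor sets:
`j ∈ Nb i` means `(j, i)` is an edge, i.e. node `j` can send information to node `i`.
The node set is partitioned into the set `R` of regular nodes and its complement,
the set of malicious nodes, whose cardinality is at most `F` (the `F`-total model).
Malicious nodes choose their states and broadcast values arbitrarily (they are
simply unconstrained below), but broadcast the same value to all neighbors. -/

/-- `MSRAbove Nbhd val xi F D`: `D` is an admissible set of removed "large" neighbors:
if fewer than `F` neighbors `j` have `val j > xi`, then exactly those are removed;
otherwise, `D` consists of `F` neighbors with values above `xi` which are largest among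
those. -/
def MSRAbove {n : ℕ} (Nbhd : Finset (Fin n)) (val : Fin n → ℝ) (xi : ℝ) (F : ℕ)
    (D : Finset (Fin n)) : Prop :=
  ((Nbhd.filter fun j => xi < val j).card < F ∧ D = Nbhd.filter fun j => xi < val j) ∨
  (F ≤ (Nbhd.filter fun j => xi < val j).card ∧
    D ⊆ (Nbhd.filter fun j => xi < val j) ∧ D.card = F ∧
    ∀ j ∈ D, ∀ l ∈ (Nbhd.filter fun j => xi < val j) \ D, val l ≤ val j)

/-- `MSRBelow Nbhd val xi F D`: `D` is an admissible set of removed "small" neighbors. -/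
def MSRBelow {n : ℕ} (Nbhd : Finset (Fin n)) (val : Fin n → ℝ) (xi : ℝ) (F : ℕ)
    (D : Finset (Fin n)) : Prop :=
  ((Nbhd.filter fun j => val j < xi).card < F ∧ D = Nbhd.filter fun j => val j < xi) ∨
  (F ≤ (Nbhd.filter fun j => val j < xi).card ∧
    D ⊆ (Nbhd.filter fun j => val j < xi) ∧ D.card = F ∧
    ∀ j ∈ D, ∀ l ∈ (Nbhd.filter fun j => val j < xi) \ D, val j ≤ val l)

/-- The variant protocol of Remark 1 (event-based MSR): every regular node `i ∈ R`
filters its neighbors' broadcast values relative to its own state `x k i`, updates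
`x (k+1) i = x k i + Σ_{j ∈ M k i} a k i j * (x̂ k j - x̂ k i)` with weights bounded
below by `γ` (including the self-weight `1 - Σ a k i j`), and broadcasts the new state
exactly when `|x̂ k i - x (k+1) i| > c0 + c1·exp(-α k)`. Malicious nodes
(those outside `R`) are unconstrained. -/
def ProtocolVariant {n : ℕ} (F : ℕ) (Nb : Fin n → Finset (Fin n)) (R : Finset (Fin n))
    (γ c0 c1 α : ℝ) (x xhat : ℕ → Fin n → ℝ)
    (a : ℕ → Fin n → Fin n → ℝ) (M : ℕ → Fin n → Finset (Fin n)) : Prop :=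
  ∀ k : ℕ, ∀ i ∈ R,
    (∃ Dmax Dmin : Finset (Fin n),
        MSRAbove (Nb i) (xhat k) (x k i) F Dmax ∧
        MSRBelow (Nb i) (xhat k) (x k i) F Dmin ∧
        M k i = Nb i \ (Dmax ∪ Dmin)) ∧
    (∀ j ∈ M k i, γ ≤ a k i j) ∧
    γ ≤ 1 - ∑ j ∈ M k i, a k i j ∧
    x (k + 1) i = x k i + ∑ j ∈ M k i, a k i j * (xhat k j - xhat k i) ∧
    xhat (k + 1) i =
      if c0 + c1 * Real.exp (-α * (k : ℝ)) < |xhat k i - x (k + 1) i| then x (k + 1) i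
      else xhat k i

/- A directed graph on `n` nodes is given by its neighbor sets:
`j ∈ Nb i` means `(j, i)` is an edge, i.e. node `j` can send information to node `i`. -/

/-- `reachSet Nb r S` is the set `X^r_S` of nodes of `S` having at least `r`
neighbors outside `S`. -/
def reachSet {n : ℕ} (Nb : Fin n → Finset (Fin n)) (r : ℕ) (S : Finset (Fin n)) :
    Finset (Fin n) :=
  S.filter fun i => r ≤ ((Nb i) \ S).card

/-- `(r,s)`-robustness of the directed graph given by neighbor sets `Nb`. -/
def IsRobust {n : ℕ} (Nb : Fin n → Finset (Fin n)) (r s : ℕ) : Prop :=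
  ∀ V1 V2 : Finset (Fin n), V1.Nonempty → V2.Nonempty → Disjoint V1 V2 →
    reachSet Nb r V1 = V1 ∨ reachSet Nb r V2 = V2 ∨
      s ≤ (reachSet Nb r V1).card + (reachSet Nb r V2).card


namespace RemarkOne

open Finset

variable {n : ℕ}

lemma sup'_neg {R : Finset (Fin n)} (hR : R.Nonempty) (f : Fin n → ℝ) :
    R.sup' hR (fun i => -(f i)) = -R.inf' hR f := by
  apply le_antisymm
  · apply Finset.sup'_le
    intro i hi
    have := Finset.inf'_le f hi
    linarith
  · rw [neg_le]
    apply Finset.le_inf'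
    intro i hi
    rw [neg_le]
    exact Finset.le_sup' (fun i => -(f i)) hi

/-- the tracking error bound at time `k`. -/
noncomputable def eps (c0 c1 α : ℝ) (k : ℕ) : ℝ :=
  c0 + c1 * Real.exp (-α * ((k - 1 : ℕ) : ℝ))

lemma eps_nonneg {c0 c1 α : ℝ} (hc0 : 0 ≤ c0) (hc1 : 0 ≤ c1) (k : ℕ) :
    0 ≤ eps c0 c1 α k := by
  have := Real.exp_pos (-α * ((k - 1 : ℕ) : ℝ))
  have : 0 ≤ c1 * Real.exp (-α * ((k - 1 : ℕ) : ℝ)) := by positivity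
  unfold eps; linarith

lemma eps_anti {c0 c1 α : ℝ} (hc1 : 0 ≤ c1) (hα : 0 ≤ α) {k k' : ℕ} (h : k ≤ k') :
    eps c0 c1 α k' ≤ eps c0 c1 α k := by
  unfold eps
  have h1 : -α * ((k' - 1 : ℕ) : ℝ) ≤ -α * ((k - 1 : ℕ) : ℝ) := by
    have : ((k - 1 : ℕ) : ℝ) ≤ ((k' - 1 : ℕ) : ℝ) := by
      exact_mod_cast Nat.sub_le_sub_right h 1
    nlinarith
  have := Real.exp_le_exp.2 h1
  nlinarith [Real.exp_pos (-α * ((k' - 1 : ℕ) : ℝ))]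

section Protocol

variable {F : ℕ} {Nb : Fin n → Finset (Fin n)} {R : Finset (Fin n)}
  {γ c0 c1 α : ℝ} {x xhat : ℕ → Fin n → ℝ}
  {a : ℕ → Fin n → Fin n → ℝ} {M : ℕ → Fin n → Finset (Fin n)}

lemma track (hP : ProtocolVariant F Nb R γ c0 c1 α x xhat a M)
    (hc0 : 0 ≤ c0) (hc1 : 0 ≤ c1)
    {i : Fin n} (hi : i ∈ R) {k : ℕ} (hk : 1 ≤ k) :
    |xhat k i - x k i| ≤ eps c0 c1 α k := by
  obtain ⟨m, rfl⟩ : ∃ m, k = m + 1 := ⟨k - 1, by omega⟩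
  obtain ⟨-, -, -, -, hbr⟩ := hP m i hi
  rw [hbr]
  split_ifs with h
  · simpa using eps_nonneg hc0 hc1 (m+1)
  · push_neg at h
    have : eps c0 c1 α (m + 1) = c0 + c1 * Real.exp (-α * (m : ℝ)) := by
      simp [eps]
    rw [this]
    exact h

lemma neg_protocol (hP : ProtocolVariant F Nb R γ c0 c1 α x xhat a M) :
    ProtocolVariant F Nb R γ c0 c1 α (fun k i => -(x k i)) (fun k i => -(xhat k i)) a M := by
  intro k i hi
  obtain ⟨⟨Dmax, Dmin, hDmax, hDmin, hM⟩, hw, hself, hupd, hbr⟩ := hP k i hi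
  refine ⟨⟨Dmin, Dmax, ?_, ?_, ?_⟩, hw, hself, ?_, ?_⟩
  · -- MSRAbove with negated values = MSRBelow with original
    have hfil : (Nb i).filter (fun j => -(x k i) < -(xhat k j))
        = (Nb i).filter (fun j => xhat k j < x k i) := by
      apply Finset.filter_congr; intro j _; simp
    unfold MSRAbove
    rw [hfil]
    unfold MSRBelow at hDmin
    rcases hDmin with ⟨h1, h2⟩ | ⟨h1, h2, h3, h4⟩
    · exact Or.inl ⟨h1, h2⟩
    · exact Or.inr ⟨h1, h2, h3, fun j hj l hl => neg_le_neg (h4 j hj l hl)⟩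
  · have hfil : (Nb i).filter (fun j => -(xhat k j) < -(x k i))
        = (Nb i).filter (fun j => x k i < xhat k j) := by
      apply Finset.filter_congr; intro j _; simp
    unfold MSRBelow
    rw [hfil]
    unfold MSRAbove at hDmax
    rcases hDmax with ⟨h1, h2⟩ | ⟨h1, h2, h3, h4⟩
    · exact Or.inl ⟨h1, h2⟩
    · exact Or.inr ⟨h1, h2, h3, fun j hj l hl => neg_le_neg (h4 j hj l hl)⟩
  · rw [hM, Finset.union_comm]
  · show -(x (k+1) i) = -(x k i) + ∑ j ∈ M k i, a k i j * (-(xhat k j) - -(xhat k i))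
    rw [hupd]
    have hterm : ∀ j ∈ M k i, a k i j * (-(xhat k j) - -(xhat k i))
        = -(a k i j * (xhat k j - xhat k i)) := fun j _ => by ring
    rw [Finset.sum_congr rfl hterm, Finset.sum_neg_distrib]
    ring
  · have habs : |-(xhat k i) - -(x (k+1) i)| = |xhat k i - x (k+1) i| := by
      rw [show -(xhat k i) - -(x (k+1) i) = -(xhat k i - x (k+1) i) by ring, abs_neg]
    show -(xhat (k+1) i) = if c0 + c1 * Real.exp (-α * (k:ℝ)) < |-(xhat k i) - -(x (k+1) i)| then -(x (k+1) i) else -(xhat k i)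
    rw [habs, hbr]
    split_ifs <;> rfl

end Protocol

end RemarkOne

namespace RemarkOne

open Finset

variable {n : ℕ}

section Protocol

variable {F : ℕ} {Nb : Fin n → Finset (Fin n)} {R : Finset (Fin n)}
  {γ c0 c1 α : ℝ} {x xhat : ℕ → Fin n → ℝ}
  {a : ℕ → Fin n → Fin n → ℝ} {M : ℕ → Fin n → Finset (Fin n)}

/-- MSR kept-value upper bound: every value used by a regular node is at most the
maximum of its own state and the largest regular broadcast value. -/
lemma kept_le (hF : (univ \ R).card ≤ F)
    (hP : ProtocolVariant F Nb R γ c0 c1 α x xhat a M) (hR : R.Nonempty)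
    (k : ℕ) {i : Fin n} (hi : i ∈ R) {j : Fin n} (hj : j ∈ M k i) :
    xhat k j ≤ max (x k i) (R.sup' hR (fun l => xhat k l)) := by
  obtain ⟨⟨Dmax, Dmin, hDmax, hDmin, hM⟩, -, -, -, -⟩ := hP k i hi
  by_cases hle : xhat k j ≤ x k i
  · exact le_trans hle (le_max_left _ _)
  push_neg at hle
  rw [hM, Finset.mem_sdiff] at hj
  obtain ⟨hjNb, hjD⟩ := hj
  have hjDmax : j ∉ Dmax := fun h => hjD (Finset.mem_union_left _ h)
  have hjf : j ∈ (Nb i).filter (fun l => x k i < xhat k l) :=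
    Finset.mem_filter.2 ⟨hjNb, hle⟩
  rcases hDmax with ⟨-, hEq⟩ | ⟨-, hsub, hcardD, hmin⟩
  · exact absurd (hEq ▸ hjf) hjDmax
  · have hins : (insert j Dmax).card = F + 1 := by
      rw [Finset.card_insert_of_notMem hjDmax, hcardD]
    have hreg : ∃ r ∈ insert j Dmax, r ∈ R := by
      by_contra hno
      push_neg at hno
      have hsubset : insert j Dmax ⊆ univ \ R :=
        fun r hr => Finset.mem_sdiff.2 ⟨Finset.mem_univ r, hno r hr⟩
      have := Finset.card_le_card hsubset
      omega
    obtain ⟨r, hrins, hrR⟩ := hreg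
    rcases Finset.mem_insert.1 hrins with rfl | hrD
    · exact le_trans (Finset.le_sup' (fun l => xhat k l) hrR) (le_max_right _ _)
    · have h1 : xhat k j ≤ xhat k r :=
        hmin r hrD j (Finset.mem_sdiff.2 ⟨hjf, hjDmax⟩)
      exact le_trans (h1.trans (Finset.le_sup' (fun l => xhat k l) hrR)) (le_max_right _ _)

/-- If a regular node has at least `F+1` neighbors with broadcast values at most `W`
(strictly below its own state), then it keeps at least one value `≤ W`. -/
lemma low_kept (hP : ProtocolVariant F Nb R γ c0 c1 α x xhat a M)
    (k : ℕ) {i : Fin n} (hi : i ∈ R) (L : Finset (Fin n)) (hLNb : L ⊆ Nb i)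
    (hcard : F + 1 ≤ L.card) {W : ℝ} (hW : ∀ j ∈ L, xhat k j ≤ W)
    (hxi : W < x k i) :
    ∃ j ∈ M k i, xhat k j ≤ W := by
  obtain ⟨⟨Dmax, Dmin, hDmax, hDmin, hM⟩, -, -, -, -⟩ := hP k i hi
  have hLf : L ⊆ (Nb i).filter (fun l => xhat k l < x k i) :=
    fun j hj => Finset.mem_filter.2 ⟨hLNb hj, lt_of_le_of_lt (hW j hj) hxi⟩
  have hDmaxsub : Dmax ⊆ (Nb i).filter (fun l => x k i < xhat k l) := by
    rcases hDmax with ⟨-, hEq⟩ | ⟨-, hsub, -, -⟩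
    · exact hEq ▸ Finset.Subset.refl _
    · exact hsub
  rcases hDmin with ⟨hclt, -⟩ | ⟨-, -, hcD, -⟩
  · have := Finset.card_le_card hLf
    omega
  · have hsd : 1 ≤ (L \ Dmin).card := by
      have := Finset.le_card_sdiff Dmin L
      have h2 : (L ∩ Dmin).card ≤ Dmin.card := Finset.card_le_card (Finset.inter_subset_right)
      have h3 : L.card - Dmin.card ≤ (L \ Dmin).card := Finset.le_card_sdiff Dmin L
      omega
    obtain ⟨j, hjL⟩ := Finset.card_pos.1 (show 0 < (L \ Dmin).card by omega)
    obtain ⟨hjL', hjDmin⟩ := Finset.mem_sdiff.1 hjL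
    refine ⟨j, ?_, hW j hjL'⟩
    rw [hM]
    refine Finset.mem_sdiff.2 ⟨hLNb hjL', ?_⟩
    intro hun
    rcases Finset.mem_union.1 hun with h | h
    · have := (Finset.mem_filter.1 (hDmaxsub h)).2
      have := hW j hjL'
      linarith
    · exact hjDmin h

end Protocol

/-- The basic convexity estimate for one update step. -/
lemma convex_step {γ U W e xi xhi : ℝ} {Mi : Finset (Fin n)} {aw val : Fin n → ℝ}
    (hγ0 : 0 < γ) (ha : ∀ j ∈ Mi, γ ≤ aw j) (hself : γ ≤ 1 - ∑ j ∈ Mi, aw j)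
    (hU : xi ≤ U) (hval : ∀ j ∈ Mi, val j ≤ U) (he : |xi - xhi| ≤ e) (he0 : 0 ≤ e)
    (hW : xi ≤ W ∨ ∃ j ∈ Mi, val j ≤ W) :
    xi + ∑ j ∈ Mi, aw j * (val j - xhi)
      ≤ γ * min W U + (1 - γ) * U + (1 - γ) * e := by
  set s := ∑ j ∈ Mi, aw j with hs
  have haw0 : ∀ j ∈ Mi, 0 ≤ aw j := fun j hj => le_trans hγ0.le (ha j hj)
  have hs0 : 0 ≤ s := Finset.sum_nonneg haw0
  have hs1 : s ≤ 1 - γ := by linarith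
  have hsplit : xi + ∑ j ∈ Mi, aw j * (val j - xhi)
      = (1 - s) * xi + (∑ j ∈ Mi, aw j * val j) + s * (xi - xhi) := by
    have h1 : ∑ j ∈ Mi, aw j * (val j - xhi)
        = (∑ j ∈ Mi, aw j * val j) - s * xhi := by
      rw [Finset.sum_congr rfl (fun j _ => mul_sub (aw j) (val j) xhi),
        Finset.sum_sub_distrib, hs, Finset.sum_mul]
    rw [h1]; ring
  have herr : s * (xi - xhi) ≤ (1 - γ) * e := by
    have h1 : xi - xhi ≤ e := (abs_le.1 he).2
    have h2 : s * (xi - xhi) ≤ s * e := mul_le_mul_of_nonneg_left h1 hs0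
    have h3 : s * e ≤ (1 - γ) * e := mul_le_mul_of_nonneg_right hs1 he0
    linarith
  have hminU : min W U ≤ U := min_le_right W U
  rcases hW with hWl | ⟨j, hjM, hjW⟩
  · have hsum : ∑ j ∈ Mi, aw j * val j ≤ s * U := by
      have h1 : ∑ j ∈ Mi, aw j * val j ≤ ∑ j ∈ Mi, aw j * U :=
        Finset.sum_le_sum fun j hj => mul_le_mul_of_nonneg_left (hval j hj) (haw0 j hj)
      rw [← Finset.sum_mul] at h1
      exact h1
    have hximin : xi ≤ min W U := le_min hWl hU
    have h3 : (1 - s) * xi ≤ (1 - s) * min W U :=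
      mul_le_mul_of_nonneg_left hximin (by linarith)
    have h4 : (1 - s) * min W U + s * U ≤ γ * min W U + (1 - γ) * U := by nlinarith
    linarith
  · have hvj : val j ≤ min W U := le_min hjW (hval j hjM)
    have haj : aw j ≤ s := Finset.single_le_sum haw0 hjM
    have hajγ : γ ≤ aw j := ha j hjM
    have hsum : ∑ l ∈ Mi, aw l * val l ≤ aw j * min W U + (s - aw j) * U := by
      have hrw : aw j * val j + ∑ l ∈ Mi.erase j, aw l * val l
          = ∑ l ∈ Mi, aw l * val l := Finset.add_sum_erase Mi (fun l => aw l * val l) hjM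
      have hrw2 : aw j + ∑ l ∈ Mi.erase j, aw l = s := Finset.add_sum_erase Mi aw hjM
      have h1 : ∑ l ∈ Mi.erase j, aw l * val l ≤ ∑ l ∈ Mi.erase j, aw l * U :=
        Finset.sum_le_sum fun l hl =>
          mul_le_mul_of_nonneg_left (hval l (Finset.mem_of_mem_erase hl))
            (haw0 l (Finset.mem_of_mem_erase hl))
      rw [← Finset.sum_mul] at h1
      have h2 : aw j * val j ≤ aw j * min W U :=
        mul_le_mul_of_nonneg_left hvj (by linarith)
      have h3 : (∑ l ∈ Mi.erase j, aw l) * U = (s - aw j) * U := by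
        rw [← hrw2]; ring
      linarith
    have hfin : (1 - s) * xi + (aw j * min W U + (s - aw j) * U)
        ≤ γ * min W U + (1 - γ) * U := by
      have h1 : (1 - s) * xi ≤ (1 - s) * U := mul_le_mul_of_nonneg_left hU (by linarith)
      nlinarith
    linarith

end RemarkOne

namespace RemarkOne

open Finset

variable {n : ℕ}

/-- The running maximum over regular nodes of states and broadcast values. -/
noncomputable def Vf (x xhat : ℕ → Fin n → ℝ) (R : Finset (Fin n)) (hR : R.Nonempty)
    (k : ℕ) : ℝ :=
  R.sup' hR (fun i => max (x k i) (xhat k i))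

/-- The running minimum over regular nodes of states and broadcast values. -/
noncomputable def vf (x xhat : ℕ → Fin n → ℝ) (R : Finset (Fin n)) (hR : R.Nonempty)
    (k : ℕ) : ℝ :=
  R.inf' hR (fun i => min (x k i) (xhat k i))

lemma Vf_neg (x xhat : ℕ → Fin n → ℝ) (R : Finset (Fin n)) (hR : R.Nonempty) (k : ℕ) :
    Vf (fun k i => -(x k i)) (fun k i => -(xhat k i)) R hR k = -(vf x xhat R hR k) := by
  unfold Vf vf
  rw [← sup'_neg hR (fun i => min (x k i) (xhat k i))]
  apply Finset.sup'_congr hR rfl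
  intro i _
  exact max_neg_neg _ _

lemma le_Vf (x xhat : ℕ → Fin n → ℝ) {R : Finset (Fin n)} (hR : R.Nonempty) (k : ℕ)
    {i : Fin n} (hi : i ∈ R) :
    x k i ≤ Vf x xhat R hR k ∧ xhat k i ≤ Vf x xhat R hR k := by
  unfold Vf
  constructor
  · exact le_trans (le_max_left _ _) (Finset.le_sup' (fun i => max (x k i) (xhat k i)) hi)
  · exact le_trans (le_max_right _ _) (Finset.le_sup' (fun i => max (x k i) (xhat k i)) hi)

lemma vf_le (x xhat : ℕ → Fin n → ℝ) {R : Finset (Fin n)} (hR : R.Nonempty) (k : ℕ)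
    {i : Fin n} (hi : i ∈ R) :
    vf x xhat R hR k ≤ x k i ∧ vf x xhat R hR k ≤ xhat k i := by
  unfold vf
  constructor
  · exact le_trans (Finset.inf'_le (fun i => min (x k i) (xhat k i)) hi) (min_le_left _ _)
  · exact le_trans (Finset.inf'_le (fun i => min (x k i) (xhat k i)) hi) (min_le_right _ _)

lemma vf_le_Vf (x xhat : ℕ → Fin n → ℝ) {R : Finset (Fin n)} (hR : R.Nonempty) (k : ℕ) :
    vf x xhat R hR k ≤ Vf x xhat R hR k := by
  obtain ⟨i, hi⟩ := hR
  have h1 := (vf_le x xhat ⟨i, hi⟩ k hi).1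
  have h2 := (le_Vf x xhat ⟨i, hi⟩ k hi).1
  calc vf x xhat R _ k ≤ x k i := h1
    _ ≤ Vf x xhat R _ k := h2

section Protocol

variable {F : ℕ} {Nb : Fin n → Finset (Fin n)} {R : Finset (Fin n)}
  {γ c0 c1 α : ℝ} {x xhat : ℕ → Fin n → ℝ}
  {a : ℕ → Fin n → Fin n → ℝ} {M : ℕ → Fin n → Finset (Fin n)}

/-- One-step upper drift bound for the running maximum. -/
lemma Vf_drift (hF : (univ \ R).card ≤ F)
    (hP : ProtocolVariant F Nb R γ c0 c1 α x xhat a M) (hR : R.Nonempty)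
    (hγ0 : 0 < γ) (hγ1 : γ ≤ 1) (hc0 : 0 ≤ c0) (hc1 : 0 ≤ c1)
    {k : ℕ} (hk : 1 ≤ k) :
    Vf x xhat R hR (k + 1) ≤ Vf x xhat R hR k + (1 - γ) * eps c0 c1 α k := by
  have hE0 : 0 ≤ eps c0 c1 α k := eps_nonneg hc0 hc1 k
  apply Finset.sup'_le
  intro i hi
  obtain ⟨-, hw, hself, hupd, hbr⟩ := hP k i hi
  have hxk : x (k + 1) i ≤ Vf x xhat R hR k + (1 - γ) * eps c0 c1 α k := by
    rw [hupd]
    have hcs := convex_step (U := Vf x xhat R hR k) (W := Vf x xhat R hR k)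
      (e := eps c0 c1 α k) hγ0 hw hself (le_Vf x xhat hR k hi).1
      (fun j hj => le_trans (kept_le hF hP hR k hi hj)
        (max_le (le_Vf x xhat hR k hi).1 (Finset.sup'_le _ _ fun l hl => (le_Vf x xhat hR k hl).2)))
      (by rw [abs_sub_comm]; exact track hP hc0 hc1 hi hk) hE0
      (Or.inl (le_Vf x xhat hR k hi).1)
    calc x k i + ∑ j ∈ M k i, a k i j * (xhat k j - xhat k i)
        ≤ γ * min (Vf x xhat R hR k) (Vf x xhat R hR k) + (1 - γ) * Vf x xhat R hR k
            + (1 - γ) * eps c0 c1 α k := hcs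
      _ = Vf x xhat R hR k + (1 - γ) * eps c0 c1 α k := by rw [min_self]; ring
  have hxhk : xhat (k + 1) i ≤ Vf x xhat R hR k + (1 - γ) * eps c0 c1 α k := by
    rw [hbr]
    split_ifs
    · exact hxk
    · have := (le_Vf x xhat hR k hi).2
      nlinarith
  exact max_le hxk hxhk

/-- Iterated upper drift bound. -/
lemma Vf_drift_iter (hF : (univ \ R).card ≤ F)
    (hP : ProtocolVariant F Nb R γ c0 c1 α x xhat a M) (hR : R.Nonempty)
    (hγ0 : 0 < γ) (hγ1 : γ ≤ 1) (hc0 : 0 ≤ c0) (hc1 : 0 ≤ c1) (hα : 0 ≤ α)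
    {k0 : ℕ} (hk0 : 1 ≤ k0) (t : ℕ) :
    Vf x xhat R hR (k0 + t) ≤ Vf x xhat R hR k0 + t * ((1 - γ) * eps c0 c1 α k0) := by
  induction t with
  | zero => simp
  | succ t ih =>
    have h1 : Vf x xhat R hR (k0 + t + 1)
        ≤ Vf x xhat R hR (k0 + t) + (1 - γ) * eps c0 c1 α (k0 + t) :=
      Vf_drift hF hP hR hγ0 hγ1 hc0 hc1 (by omega)
    have h2 : eps c0 c1 α (k0 + t) ≤ eps c0 c1 α k0 := eps_anti hc1 hα (by omega)
    have h3 : (1 - γ) * eps c0 c1 α (k0 + t) ≤ (1 - γ) * eps c0 c1 α k0 :=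
      mul_le_mul_of_nonneg_left h2 (by linarith)
    have : (k0 + (t + 1)) = (k0 + t) + 1 := by omega
    rw [this]
    push_cast
    nlinarith
end Protocol

end RemarkOne

namespace RemarkOne

open Finset

variable {n : ℕ}

/-- The accumulated threshold-error sequence. -/
noncomputable def Bseq (γ E : ℝ) : ℕ → ℝ
  | 0 => 0
  | t + 1 => γ * Bseq γ E t + ((1 - γ)^2 * t + 1) * E

lemma Bseq_nonneg {γ E : ℝ} (hγ0 : 0 ≤ γ) (hE : 0 ≤ E) : ∀ t, 0 ≤ Bseq γ E t := by
  intro t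
  induction t with
  | zero => simp [Bseq]
  | succ t ih =>
    have h1 : 0 ≤ ((1 - γ)^2 * t + 1) * E := by positivity
    have h2 : 0 ≤ γ * Bseq γ E t := mul_nonneg hγ0 ih
    simp only [Bseq]
    linarith

lemma Bseq_le {γ E : ℝ} (hγ0 : 0 ≤ γ) (hγ1 : γ ≤ 1/2) (hE : 0 ≤ E) :
    ∀ t, Bseq γ E t ≤ (1 - γ) * t * E + E / (1 - γ) := by
  intro t
  induction t with
  | zero =>
    have hγlt : (0:ℝ) < 1 - γ := by linarith
    simp [Bseq]
    positivity
  | succ t ih =>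
    simp only [Bseq]
    have hγlt : (0:ℝ) < 1 - γ := by linarith
    have h1 : γ * Bseq γ E t ≤ γ * ((1 - γ) * t * E + E / (1 - γ)) :=
      mul_le_mul_of_nonneg_left ih hγ0
    have h2 : γ * (E / (1 - γ)) + E = E / (1 - γ) := by
      field_simp
      ring
    push_cast
    nlinarith
lemma Bseq_le' {γ E : ℝ} (hγ0 : 0 ≤ γ) (hγ1 : γ ≤ 1/2) (hE : 0 ≤ E) (t : ℕ) :
    Bseq γ E t ≤ t * E + 2 * E := by
  have h1 := Bseq_le hγ0 hγ1 hE t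
  have hγlt : (1:ℝ)/2 ≤ 1 - γ := by linarith
  have h2 : E / (1 - γ) ≤ 2 * E := by
    rw [div_le_iff₀ (by linarith)]
    nlinarith
  have h3 : (1 - γ) * t * E ≤ t * E := by
    have : (0:ℝ) ≤ (t:ℝ) * E := by positivity
    nlinarith
  linarith

/-- The key threshold inequality. -/
lemma key_ineq {γ E D0 V0 : ℝ} (hγ0 : 0 < γ) (hγ1 : γ ≤ 1/2) (hE : 0 ≤ E)
    (hD0 : 0 ≤ D0) (t : ℕ) :
    γ * min (V0 - γ^t * (D0/2) + Bseq γ E t + E) (V0 + t * ((1 - γ) * E))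
      + (1 - γ) * (V0 + t * ((1 - γ) * E)) + (1 - γ) * E
      ≤ V0 - γ^(t+1) * (D0/2) + Bseq γ E (t+1) := by
  set B := Bseq γ E t with hB
  set T := V0 - γ^t * (D0/2) + B with hT
  set U := V0 + t * ((1 - γ) * E) with hU
  have hBs : Bseq γ E (t+1) = γ * B + ((1 - γ)^2 * t + 1) * E := by simp [Bseq, hB]
  have hpow : γ^(t+1) = γ^t * γ := pow_succ γ t
  rcases le_or_gt (T + E) U with h | h
  · rw [min_eq_left h]
    rw [hBs, hpow, hT, hU]
    ring_nf
    nlinarith [sq_nonneg (1 - γ)]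
  · rw [min_eq_right h.le]
    have hBgt : γ^t * (D0/2) + t * ((1 - γ) * E) - E < B := by
      rw [hT] at h
      linarith [hU ▸ h]
    have hmul : γ * (γ^t * (D0/2) + t * ((1 - γ) * E) - E) ≤ γ * B :=
      mul_le_mul_of_nonneg_left hBgt.le hγ0.le
    rw [hBs, hpow, hU]
    nlinarith
end RemarkOne

namespace RemarkOne

open Finset

variable {n : ℕ}

section Protocol

variable {F : ℕ} {Nb : Fin n → Finset (Fin n)} {R : Finset (Fin n)}
  {γ c0 c1 α : ℝ} {x xhat : ℕ → Fin n → ℝ}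
  {a : ℕ → Fin n → Fin n → ℝ} {M : ℕ → Fin n → Finset (Fin n)}

/-- The step-out lemma: if a regular node either is below the threshold or keeps a
value below the threshold, then its state and broadcast value drop below the next
threshold. -/
lemma step_out (hF : (univ \ R).card ≤ F)
    (hP : ProtocolVariant F Nb R γ c0 c1 α x xhat a M) (hR : R.Nonempty)
    (hγ0 : 0 < γ) (hγ1 : γ ≤ 1) (hc0 : 0 ≤ c0) (hc1 : 0 ≤ c1) (hα : 0 ≤ α)
    {k : ℕ} (hk : 1 ≤ k) {i : Fin n} (hi : i ∈ R)
    {U W E T1 : ℝ} (hE : eps c0 c1 α k ≤ E) (hE' : eps c0 c1 α (k+1) ≤ E)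
    (hxU : ∀ l ∈ R, x k l ≤ U) (hxhU : ∀ l ∈ R, xhat k l ≤ U)
    (hkey : γ * min W U + (1 - γ) * U + (1 - γ) * E ≤ T1)
    (hcase : x k i ≤ W ∨ ∃ j ∈ M k i, xhat k j ≤ W) :
    x (k + 1) i ≤ T1 ∧ xhat (k + 1) i ≤ T1 + E := by
  have hE0 : 0 ≤ E := le_trans (eps_nonneg hc0 hc1 k) hE
  obtain ⟨-, hw, hself, hupd, hbr⟩ := hP k i hi
  have hx1 : x (k + 1) i ≤ T1 := by
    rw [hupd]
    have hcs := convex_step (U := U) (W := W) (e := E) hγ0 hw hself (hxU i hi)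
      (fun j hj => le_trans (kept_le hF hP hR k hi hj)
        (max_le (hxU i hi) (Finset.sup'_le _ _ fun l hl => hxhU l hl)))
      (by rw [abs_sub_comm]; exact le_trans (track hP hc0 hc1 hi hk) hE) hE0
      hcase
    linarith
  refine ⟨hx1, ?_⟩
  rw [hbr]
  split_ifs with h
  · linarith
  · push_neg at h
    have heq : eps c0 c1 α (k+1) = c0 + c1 * Real.exp (-α * (k : ℝ)) := by simp [eps]
    have h2 : |xhat k i - x (k+1) i| ≤ E := le_trans (heq ▸ h) hE'
    have h3 := (abs_le.1 h2).2
    linarith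

end Protocol

end RemarkOne

namespace RemarkOne

open Finset

variable {n : ℕ}

section Protocol

variable {F N : ℕ} {Nb : Fin n → Finset (Fin n)} {R : Finset (Fin n)}
  {γ c0 c1 α : ℝ} {x xhat : ℕ → Fin n → ℝ}
  {a : ℕ → Fin n → Fin n → ℝ} {M : ℕ → Fin n → Finset (Fin n)}

lemma window (hF : (univ \ R).card ≤ F) (hRobust : IsRobust Nb (F + 1) (F + 1))
    (hN : R.card = N)
    (hγ0 : 0 < γ) (hγ : γ ≤ 1/2) (hc0 : 0 ≤ c0) (hc1 : 0 ≤ c1) (hα : 0 ≤ α)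
    (hP : ProtocolVariant F Nb R γ c0 c1 α x xhat a M) (hR : R.Nonempty)
    {k0 : ℕ} (hk0 : 1 ≤ k0) :
    Vf x xhat R hR (k0 + N) - vf x xhat R hR (k0 + N)
      ≤ (1 - γ^N/2) * (Vf x xhat R hR k0 - vf x xhat R hR k0)
        + (2 * N + 3) * eps c0 c1 α k0 := by
  classical
  have hγ1 : γ ≤ 1 := by linarith
  set E := eps c0 c1 α k0 with hEdef
  have hE0 : 0 ≤ E := eps_nonneg hc0 hc1 k0
  set V0 := Vf x xhat R hR k0 with hV0
  set v0 := vf x xhat R hR k0 with hv0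
  have hD0 : 0 ≤ V0 - v0 := by
    have := vf_le_Vf x xhat hR k0
    linarith
  set xN : ℕ → Fin n → ℝ := fun k i => -(x k i) with hxN
  set xhatN : ℕ → Fin n → ℝ := fun k i => -(xhat k i) with hxhatN
  have hPN : ProtocolVariant F Nb R γ c0 c1 α xN xhatN a M := neg_protocol hP
  have hVfN : ∀ k, Vf xN xhatN R hR k = -(vf x xhat R hR k) := fun k => Vf_neg x xhat R hR k
  set T : ℕ → ℝ := fun t => V0 - γ^t * ((V0 - v0)/2) + Bseq γ E t with hTdef
  set T2 : ℕ → ℝ := fun t => -v0 - γ^t * ((V0 - v0)/2) + Bseq γ E t with hT2def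
  -- state/broadcast upper bounds within the window
  have hUb : ∀ t, ∀ l ∈ R, x (k0+t) l ≤ V0 + t * ((1-γ)*E)
      ∧ xhat (k0+t) l ≤ V0 + t * ((1-γ)*E) := by
    intro t l hl
    have h1 := Vf_drift_iter hF hP hR hγ0 hγ1 hc0 hc1 hα hk0 t
    have h2 := le_Vf x xhat hR (k0+t) hl
    rw [← hEdef, ← hV0] at h1
    exact ⟨le_trans h2.1 h1, le_trans h2.2 h1⟩
  have hUb2 : ∀ t, ∀ l ∈ R, xN (k0+t) l ≤ -v0 + t * ((1-γ)*E)
      ∧ xhatN (k0+t) l ≤ -v0 + t * ((1-γ)*E) := by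
    intro t l hl
    have h1 := Vf_drift_iter hF hPN hR hγ0 hγ1 hc0 hc1 hα hk0 t
    have h2 := le_Vf xN xhatN hR (k0+t) hl
    rw [hVfN, hVfN, ← hEdef, ← hv0] at h1
    have h3 : Vf xN xhatN R hR (k0+t) = -(vf x xhat R hR (k0+t)) := hVfN _
    rw [h3] at h2
    exact ⟨le_trans h2.1 h1, le_trans h2.2 h1⟩
  -- the sets of nodes above / below the thresholds
  set Z1 : ℕ → Finset (Fin n) := fun t =>
    R.filter (fun i => T t < x (k0+t) i ∨ T t + E < xhat (k0+t) i)
      ∪ (univ \ R).filter (fun i => T t < xhat (k0+t) i) with hZ1def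
  set Z2 : ℕ → Finset (Fin n) := fun t =>
    R.filter (fun i => T2 t < xN (k0+t) i ∨ T2 t + E < xhatN (k0+t) i)
      ∪ (univ \ R).filter (fun i => T2 t < xhatN (k0+t) i) with hZ2def
  have hmem1 : ∀ t, ∀ i ∈ R, i ∉ Z1 t ↔ (x (k0+t) i ≤ T t ∧ xhat (k0+t) i ≤ T t + E) := by
    intro t i hi
    simp only [hZ1def, Finset.mem_union, Finset.mem_filter, Finset.mem_sdiff,
      Finset.mem_univ, true_and]
    constructor
    · intro h
      push_neg at h
      exact ⟨(h.1 hi).1, (h.1 hi).2⟩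
    · rintro ⟨h1, h2⟩ h
      rcases h with ⟨-, h | h⟩ | ⟨hnR, -⟩
      · exact absurd h (not_lt.2 h1)
      · exact absurd h (not_lt.2 h2)
      · exact hnR hi
  have hmem2 : ∀ t, ∀ i ∈ R, i ∉ Z2 t ↔ (xN (k0+t) i ≤ T2 t ∧ xhatN (k0+t) i ≤ T2 t + E) := by
    intro t i hi
    simp only [hZ2def, Finset.mem_union, Finset.mem_filter, Finset.mem_sdiff,
      Finset.mem_univ, true_and]
    constructor
    · intro h
      push_neg at h
      exact ⟨(h.1 hi).1, (h.1 hi).2⟩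
    · rintro ⟨h1, h2⟩ h
      rcases h with ⟨-, h | h⟩ | ⟨hnR, -⟩
      · exact absurd h (not_lt.2 h1)
      · exact absurd h (not_lt.2 h2)
      · exact hnR hi
  have hmal1 : ∀ t, ∀ j, j ∉ R → j ∉ Z1 t → xhat (k0+t) j ≤ T t := by
    intro t j hjR hjZ
    by_contra hc
    exact hjZ (by
      simp only [hZ1def, Finset.mem_union, Finset.mem_filter, Finset.mem_sdiff,
        Finset.mem_univ, true_and]
      exact Or.inr ⟨hjR, not_le.1 hc⟩)
  have hmal2 : ∀ t, ∀ j, j ∉ R → j ∉ Z2 t → xhatN (k0+t) j ≤ T2 t := by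
    intro t j hjR hjZ
    by_contra hc
    exact hjZ (by
      simp only [hZ2def, Finset.mem_union, Finset.mem_filter, Finset.mem_sdiff,
        Finset.mem_univ, true_and]
      exact Or.inr ⟨hjR, not_le.1 hc⟩)
  have htrE : ∀ t, ∀ i ∈ R, |xhat (k0+t) i - x (k0+t) i| ≤ E := fun t i hi =>
    le_trans (track hP hc0 hc1 hi (by omega)) (eps_anti hc1 hα (by omega))
  -- the key threshold inequalities
  have hkey1 : ∀ t, γ * min (T t + E) (V0 + t * ((1-γ)*E))
      + (1-γ) * (V0 + t * ((1-γ)*E)) + (1-γ)*E ≤ T (t+1) := by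
    intro t
    have := key_ineq (V0 := V0) (D0 := V0 - v0) hγ0 hγ hE0 hD0 t
    simpa only [hTdef] using this
  have hkey2 : ∀ t, γ * min (T2 t + E) (-v0 + t * ((1-γ)*E))
      + (1-γ) * (-v0 + t * ((1-γ)*E)) + (1-γ)*E ≤ T2 (t+1) := by
    intro t
    have := key_ineq (V0 := -v0) (D0 := V0 - v0) hγ0 hγ hE0 hD0 t
    simpa only [hT2def] using this
  -- the step-out property
  have hout1 : ∀ t, ∀ i ∈ R,
      (x (k0+t) i ≤ T t + E ∨ ∃ j ∈ M (k0+t) i, xhat (k0+t) j ≤ T t + E) →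
      x (k0+t+1) i ≤ T (t+1) ∧ xhat (k0+t+1) i ≤ T (t+1) + E := by
    intro t i hi hcase
    exact step_out hF hP hR hγ0 hγ1 hc0 hc1 hα (k := k0+t) (by omega) hi
      (eps_anti hc1 hα (by omega)) (eps_anti hc1 hα (by omega))
      (fun l hl => (hUb t l hl).1) (fun l hl => (hUb t l hl).2) (hkey1 t) hcase
  have hout2 : ∀ t, ∀ i ∈ R,
      (xN (k0+t) i ≤ T2 t + E ∨ ∃ j ∈ M (k0+t) i, xhatN (k0+t) j ≤ T2 t + E) →
      xN (k0+t+1) i ≤ T2 (t+1) ∧ xhatN (k0+t+1) i ≤ T2 (t+1) + E := by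
    intro t i hi hcase
    exact step_out hF hPN hR hγ0 hγ1 hc0 hc1 hα (k := k0+t) (by omega) hi
      (eps_anti hc1 hα (by omega)) (eps_anti hc1 hα (by omega))
      (fun l hl => (hUb2 t l hl).1) (fun l hl => (hUb2 t l hl).2) (hkey2 t) hcase
  -- monotonicity: regular nodes never re-enter
  have hmono1 : ∀ t, ∀ i ∈ R, i ∉ Z1 t → i ∉ Z1 (t+1) := by
    intro t i hi hni
    have h := (hmem1 t i hi).1 hni
    have hstep := hout1 t i hi (Or.inl (by linarith [h.1]))
    exact (hmem1 (t+1) i hi).2 ⟨hstep.1, hstep.2⟩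
  have hmono2 : ∀ t, ∀ i ∈ R, i ∉ Z2 t → i ∉ Z2 (t+1) := by
    intro t i hi hni
    have h := (hmem2 t i hi).1 hni
    have hstep := hout2 t i hi (Or.inl (by linarith [h.1]))
    exact (hmem2 (t+1) i hi).2 ⟨hstep.1, hstep.2⟩
  -- disjointness of Z1 and Z2
  have hdisj : ∀ t, Disjoint (Z1 t) (Z2 t) := by
    intro t
    have hTS : -(T2 t) ≤ T t := by
      have hB := Bseq_nonneg hγ0.le hE0 t
      have hpow : γ^t ≤ 1 := pow_le_one₀ hγ0.le hγ1
      simp only [hTdef, hT2def]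
      nlinarith
    rw [Finset.disjoint_left]
    intro i h1 h2
    rcases Finset.mem_union.1 h1 with hA | hA <;> rcases Finset.mem_union.1 h2 with hB | hB
    · obtain ⟨hiR, hp1⟩ := Finset.mem_filter.1 hA
      obtain ⟨-, hp2⟩ := Finset.mem_filter.1 hB
      have htr := abs_le.1 (htrE t i hiR)
      simp only [hxN, hxhatN] at hp2
      rcases hp1 with h | h <;> rcases hp2 with h' | h' <;> [linarith; linarith; linarith; linarith]
    · obtain ⟨hiR, -⟩ := Finset.mem_filter.1 hA
      obtain ⟨hiS, -⟩ := Finset.mem_filter.1 hB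
      exact (Finset.mem_sdiff.1 hiS).2 hiR
    · obtain ⟨hiR, -⟩ := Finset.mem_filter.1 hB
      obtain ⟨hiS, -⟩ := Finset.mem_filter.1 hA
      exact (Finset.mem_sdiff.1 hiS).2 hiR
    · obtain ⟨-, hp1⟩ := Finset.mem_filter.1 hA
      obtain ⟨-, hp2⟩ := Finset.mem_filter.1 hB
      simp only [hxhatN] at hp2
      linarith
  -- the robustness kick
  have hkick : ∀ t, (Z1 t ∩ R).Nonempty → (Z2 t ∩ R).Nonempty →
      (Z1 (t+1) ∩ R).card + (Z2 (t+1) ∩ R).card + 1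
        ≤ (Z1 t ∩ R).card + (Z2 t ∩ R).card := by
    intro t h1 h2
    obtain ⟨i1, hi1⟩ := h1
    obtain ⟨i2, hi2⟩ := h2
    obtain ⟨hi1Z, hi1R⟩ := Finset.mem_inter.1 hi1
    obtain ⟨hi2Z, hi2R⟩ := Finset.mem_inter.1 hi2
    have hss1 : Z1 (t+1) ∩ R ⊆ Z1 t ∩ R := by
      intro j hj
      obtain ⟨hjZ, hjR⟩ := Finset.mem_inter.1 hj
      by_contra hc
      exact (hmono1 t j hjR (fun hmem => hc (Finset.mem_inter.2 ⟨hmem, hjR⟩))) hjZ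
    have hss2 : Z2 (t+1) ∩ R ⊆ Z2 t ∩ R := by
      intro j hj
      obtain ⟨hjZ, hjR⟩ := Finset.mem_inter.1 hj
      by_contra hc
      exact (hmono2 t j hjR (fun hmem => hc (Finset.mem_inter.2 ⟨hmem, hjR⟩))) hjZ
    have hwit : (∃ i ∈ R, i ∈ Z1 t ∧ F + 1 ≤ ((Nb i) \ Z1 t).card)
        ∨ (∃ i ∈ R, i ∈ Z2 t ∧ F + 1 ≤ ((Nb i) \ Z2 t).card) := by
      rcases hRobust (Z1 t) (Z2 t) ⟨i1, hi1Z⟩ ⟨i2, hi2Z⟩ (hdisj t) with hX | hX | hX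
      · have : i1 ∈ reachSet Nb (F+1) (Z1 t) := by rw [hX]; exact hi1Z
        obtain ⟨-, hcard⟩ := Finset.mem_filter.1 this
        exact Or.inl ⟨i1, hi1R, hi1Z, hcard⟩
      · have : i2 ∈ reachSet Nb (F+1) (Z2 t) := by rw [hX]; exact hi2Z
        obtain ⟨-, hcard⟩ := Finset.mem_filter.1 this
        exact Or.inr ⟨i2, hi2R, hi2Z, hcard⟩
      · have hreg : ∃ i ∈ reachSet Nb (F+1) (Z1 t) ∪ reachSet Nb (F+1) (Z2 t), i ∈ R := by
          by_contra hno
          push_neg at hno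
          have hsub : reachSet Nb (F+1) (Z1 t) ∪ reachSet Nb (F+1) (Z2 t) ⊆ univ \ R :=
            fun r hr => Finset.mem_sdiff.2 ⟨Finset.mem_univ r, hno r hr⟩
          have hdis : Disjoint (reachSet Nb (F+1) (Z1 t)) (reachSet Nb (F+1) (Z2 t)) :=
            Disjoint.mono (Finset.filter_subset _ _) (Finset.filter_subset _ _) (hdisj t)
          have hcc := Finset.card_le_card hsub
          rw [Finset.card_union_of_disjoint hdis] at hcc
          omega
        obtain ⟨i, hiU, hiR⟩ := hreg
        rcases Finset.mem_union.1 hiU with h | h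
        · obtain ⟨hiZ, hcard⟩ := Finset.mem_filter.1 h
          exact Or.inl ⟨i, hiR, hiZ, hcard⟩
        · obtain ⟨hiZ, hcard⟩ := Finset.mem_filter.1 h
          exact Or.inr ⟨i, hiR, hiZ, hcard⟩
    rcases hwit with ⟨i, hiR, hiZ, hcard⟩ | ⟨i, hiR, hiZ, hcard⟩
    · -- a regular node leaves Z1
      have hnbr : ∀ j ∈ Nb i \ Z1 t, xhat (k0+t) j ≤ T t + E := by
        intro j hj
        obtain ⟨hjNb, hjZ⟩ := Finset.mem_sdiff.1 hj
        by_cases hjR : j ∈ R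
        · exact ((hmem1 t j hjR).1 hjZ).2
        · have := hmal1 t j hjR hjZ
          linarith
      have hcase : x (k0+t) i ≤ T t + E ∨ ∃ j ∈ M (k0+t) i, xhat (k0+t) j ≤ T t + E := by
        by_cases hxi : x (k0+t) i ≤ T t + E
        · exact Or.inl hxi
        · exact Or.inr (low_kept hP (k0+t) hiR (Nb i \ Z1 t) Finset.sdiff_subset hcard
            hnbr (not_le.1 hxi))
      have hiout : i ∉ Z1 (t+1) := by
        have hstep := hout1 t i hiR hcase
        exact (hmem1 (t+1) i hiR).2 ⟨hstep.1, hstep.2⟩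
      have hss : Z1 (t+1) ∩ R ⊆ (Z1 t ∩ R).erase i := by
        intro j hj
        refine Finset.mem_erase.2 ⟨?_, hss1 hj⟩
        rintro rfl
        exact hiout (Finset.mem_inter.1 hj).1
      have hc1 : (Z1 (t+1) ∩ R).card + 1 ≤ (Z1 t ∩ R).card := by
        have h1 := Finset.card_le_card hss
        have h2 : i ∈ Z1 t ∩ R := Finset.mem_inter.2 ⟨hiZ, hiR⟩
        rw [Finset.card_erase_of_mem h2] at h1
        have h3 : 0 < (Z1 t ∩ R).card := Finset.card_pos.2 ⟨i, h2⟩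
        omega
      have hc2 := Finset.card_le_card hss2
      omega
    · -- a regular node leaves Z2
      have hnbr : ∀ j ∈ Nb i \ Z2 t, xhatN (k0+t) j ≤ T2 t + E := by
        intro j hj
        obtain ⟨hjNb, hjZ⟩ := Finset.mem_sdiff.1 hj
        by_cases hjR : j ∈ R
        · exact ((hmem2 t j hjR).1 hjZ).2
        · have := hmal2 t j hjR hjZ
          linarith
      have hcase : xN (k0+t) i ≤ T2 t + E ∨ ∃ j ∈ M (k0+t) i, xhatN (k0+t) j ≤ T2 t + E := by
        by_cases hxi : xN (k0+t) i ≤ T2 t + E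
        · exact Or.inl hxi
        · exact Or.inr (low_kept hPN (k0+t) hiR (Nb i \ Z2 t) Finset.sdiff_subset hcard
            hnbr (not_le.1 hxi))
      have hiout : i ∉ Z2 (t+1) := by
        have hstep := hout2 t i hiR hcase
        exact (hmem2 (t+1) i hiR).2 ⟨hstep.1, hstep.2⟩
      have hss : Z2 (t+1) ∩ R ⊆ (Z2 t ∩ R).erase i := by
        intro j hj
        refine Finset.mem_erase.2 ⟨?_, hss2 hj⟩
        rintro rfl
        exact hiout (Finset.mem_inter.1 hj).1
      have hc1 : (Z2 (t+1) ∩ R).card + 1 ≤ (Z2 t ∩ R).card := by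
        have h1 := Finset.card_le_card hss
        have h2 : i ∈ Z2 t ∩ R := Finset.mem_inter.2 ⟨hiZ, hiR⟩
        rw [Finset.card_erase_of_mem h2] at h1
        have h3 : 0 < (Z2 t ∩ R).card := Finset.card_pos.2 ⟨i, h2⟩
        omega
      have hc2 := Finset.card_le_card hss1
      omega
  -- counting: after N steps one side is empty
  have hc0N : (Z1 0 ∩ R).card + (Z2 0 ∩ R).card ≤ N := by
    have hdisj0 : Disjoint (Z1 0 ∩ R) (Z2 0 ∩ R) :=
      Disjoint.mono Finset.inter_subset_left Finset.inter_subset_left (hdisj 0)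
    have hsub : (Z1 0 ∩ R) ∪ (Z2 0 ∩ R) ⊆ R :=
      Finset.union_subset Finset.inter_subset_right Finset.inter_subset_right
    have h1 := Finset.card_le_card hsub
    rw [Finset.card_union_of_disjoint hdisj0] at h1
    omega
  have hempty : ∃ t ≤ N, (Z1 t ∩ R) = ∅ ∨ (Z2 t ∩ R) = ∅ := by
    by_contra h
    push_neg at h
    have key : ∀ t, t ≤ N → (Z1 t ∩ R).card + (Z2 t ∩ R).card + t ≤ N := by
      intro t
      induction t with
      | zero => intro _; simpa using hc0N
      | succ t ih =>
        intro ht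
        have h1 := (h t (by omega)).1
        have h2 := (h t (by omega)).2
        have hk := hkick t h1
          h2
        have := ih (by omega)
        omega
    have hN2 := key N le_rfl
    have h1 := (h N le_rfl).1
    have h2 := Finset.card_pos.2 h1
    omega
  have hstep1 : ∀ s, Z1 s ∩ R = ∅ → Z1 (s+1) ∩ R = ∅ := by
    intro s hs
    rw [Finset.eq_empty_iff_forall_notMem] at hs ⊢
    intro j hj
    obtain ⟨hjZ, hjR⟩ := Finset.mem_inter.1 hj
    exact (hmono1 s j hjR (fun hmem => hs j (Finset.mem_inter.2 ⟨hmem, hjR⟩))) hjZ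
  have hstep2 : ∀ s, Z2 s ∩ R = ∅ → Z2 (s+1) ∩ R = ∅ := by
    intro s hs
    rw [Finset.eq_empty_iff_forall_notMem] at hs ⊢
    intro j hj
    obtain ⟨hjZ, hjR⟩ := Finset.mem_inter.1 hj
    exact (hmono2 s j hjR (fun hmem => hs j (Finset.mem_inter.2 ⟨hmem, hjR⟩))) hjZ
  have hpersist1 : ∀ t s, Z1 t ∩ R = ∅ → Z1 (t+s) ∩ R = ∅ := by
    intro t s he
    induction s with
    | zero => exact he
    | succ s ih => exact hstep1 (t+s) ih
  have hpersist2 : ∀ t s, Z2 t ∩ R = ∅ → Z2 (t+s) ∩ R = ∅ := by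
    intro t s he
    induction s with
    | zero => exact he
    | succ s ih => exact hstep2 (t+s) ih
  have hBN := Bseq_le' hγ0.le hγ hE0 N
  have hdrift2 : -(vf x xhat R hR (k0+N)) ≤ -v0 + N * ((1-γ)*E) := by
    have h1 := Vf_drift_iter hF hPN hR hγ0 hγ1 hc0 hc1 hα hk0 N
    rw [hVfN, hVfN, ← hEdef, ← hv0] at h1
    exact h1
  have hdrift1 : Vf x xhat R hR (k0+N) ≤ V0 + N * ((1-γ)*E) := by
    have h1 := Vf_drift_iter hF hP hR hγ0 hγ1 hc0 hc1 hα hk0 N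
    rw [← hEdef, ← hV0] at h1
    exact h1
  have hdriftN : N * ((1-γ)*E) ≤ N * E := by
    have : (1-γ)*E ≤ E := by nlinarith
    have hN0 : (0:ℝ) ≤ N := Nat.cast_nonneg N
    nlinarith
  obtain ⟨t0, ht0N, hcase⟩ := hempty
  rcases hcase with hc1 | hc1
  · -- Z1 side empties: the maximum comes down
    have hZ1N : Z1 N ∩ R = ∅ := by
      have := hpersist1 t0 (N - t0) hc1
      rwa [show t0 + (N - t0) = N by omega] at this
    have hVN : Vf x xhat R hR (k0+N) ≤ T N + E := by
      apply Finset.sup'_le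
      intro i hi
      have hni : i ∉ Z1 N := fun hmem => by
        rw [Finset.eq_empty_iff_forall_notMem] at hZ1N
        exact hZ1N i (Finset.mem_inter.2 ⟨hmem, hi⟩)
      have hh := (hmem1 N i hi).1 hni
      exact max_le (by linarith [hh.1]) hh.2
    have hTN : T N = V0 - γ^N * ((V0 - v0)/2) + Bseq γ E N := by simp [hTdef]
    have hvv : vf x xhat R hR (k0+N) ≥ v0 - N * ((1-γ)*E) := by linarith
    rw [hTN] at hVN
    have hexp : (1 - γ^N/2) * (V0 - v0) = (V0 - v0) - γ^N * ((V0 - v0)/2) := by ring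
    linarith
  · -- Z2 side empties: the minimum comes up
    have hZ2N : Z2 N ∩ R = ∅ := by
      have := hpersist2 t0 (N - t0) hc1
      rwa [show t0 + (N - t0) = N by omega] at this
    have hVN : Vf xN xhatN R hR (k0+N) ≤ T2 N + E := by
      apply Finset.sup'_le
      intro i hi
      have hni : i ∉ Z2 N := fun hmem => by
        rw [Finset.eq_empty_iff_forall_notMem] at hZ2N
        exact hZ2N i (Finset.mem_inter.2 ⟨hmem, hi⟩)
      have hh := (hmem2 N i hi).1 hni
      exact max_le (by linarith [hh.1]) hh.2
    rw [hVfN] at hVN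
    have hT2N : T2 N = -v0 - γ^N * ((V0 - v0)/2) + Bseq γ E N := by simp [hT2def]
    rw [hT2N] at hVN
    have hexp : (1 - γ^N/2) * (V0 - v0) = (V0 - v0) - γ^N * ((V0 - v0)/2) := by ring
    linarith

end Protocol

end RemarkOne

namespace RemarkOne

open Finset Filter

variable {n : ℕ}

set_option maxHeartbeats 1000000 in
theorem main {F N : ℕ} (Nb : Fin n → Finset (Fin n))
    (R : Finset (Fin n)) (hF : (Finset.univ \ R).card ≤ F)
    (hRobust : IsRobust Nb (F + 1) (F + 1))
    (hN : R.card = N) (hN1 : 1 ≤ N)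
    (γ c0 c1 α c : ℝ) (hγ0 : 0 < γ) (hγ : γ ≤ 1 / 2)
    (hc0 : 0 ≤ c0) (hc1 : 0 ≤ c1) (hα : 0 < α) (hc : 0 ≤ c)
    (hc0c : c0 ≤ γ ^ N * c / (8 * N))
    (x xhat : ℕ → Fin n → ℝ) (a : ℕ → Fin n → Fin n → ℝ)
    (M : ℕ → Fin n → Finset (Fin n))
    (hP : ProtocolVariant F Nb R γ c0 c1 α x xhat a M) :
    ∀ i ∈ R, ∀ j ∈ R,
      Filter.limsup (fun k => |x k i - x k j|) Filter.atTop ≤ c := by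
  intro i hi j hj
  by_cases hij : i = j
  · subst hij
    have heq : (fun k => |x k i - x k i|) = fun _ => (0:ℝ) := funext fun k => by simp
    rw [heq, Filter.limsup_const]
    exact hc
  -- main case : N ≥ 2
  have hN2 : 2 ≤ N := by
    have : 1 < R.card := Finset.one_lt_card.2 ⟨i, hi, j, hj, hij⟩
    omega
  have hR : R.Nonempty := ⟨i, hi⟩
  have hγ1 : γ ≤ 1 := by linarith
  have hα' : (0:ℝ) ≤ α := hα.le
  set D : ℕ → ℝ := fun k => Vf x xhat R hR k - vf x xhat R hR k with hD
  have hD0 : ∀ k, 0 ≤ D k := fun k => by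
    have := vf_le_Vf x xhat hR k
    simp only [hD]
    linarith
  have habsD : ∀ k, |x k i - x k j| ≤ D k := by
    intro k
    have h1 := (le_Vf x xhat hR k hi).1
    have h2 := (vf_le x xhat hR k hj).1
    have h3 := (le_Vf x xhat hR k hj).1
    have h4 := (vf_le x xhat hR k hi).1
    rw [abs_sub_le_iff]
    constructor <;> simp only [hD] <;> linarith
  have hγN0 : (0:ℝ) < γ^N := pow_pos hγ0 N
  have hγN1 : γ^N ≤ 1 := pow_le_one₀ hγ0.le hγ1
  have hγN4 : γ^N ≤ 1/4 := by
    calc γ^N ≤ (1/2:ℝ)^N := pow_le_pow_left₀ hγ0.le hγ N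
      _ ≤ (1/2:ℝ)^2 := pow_le_pow_of_le_one (by norm_num) (by norm_num) hN2
      _ = 1/4 := by norm_num
  set q : ℝ := 1 - γ^N/2 with hq
  have hq0 : 0 ≤ q := by simp only [hq]; linarith
  have hq1 : q < 1 := by simp only [hq]; linarith
  set K : ℝ := 2*(N:ℝ)+3 with hK
  have hK0 : 0 < K := by positivity
  have hNR : (2:ℝ) ≤ (N:ℝ) := by exact_mod_cast hN2
  set P : ℝ := 2*K/γ^N + 2*N with hP'
  have hPpos : 0 < P := by
    have h1 : 0 < 2*K/γ^N := by positivity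
    have h2 : (0:ℝ) ≤ 2*N := by positivity
    simp only [hP']
    linarith
  -- key arithmetic bound
  have hPc : P * c0 ≤ c := by
    have h1 : c0 * (8*N) ≤ γ^N * c := by
      have h8N : (0:ℝ) < 8*N := by positivity
      calc c0 * (8*N) ≤ (γ^N * c / (8*N)) * (8*N) :=
            mul_le_mul_of_nonneg_right hc0c (by positivity)
        _ = γ^N * c := by field_simp
    have hmul : P * c0 * γ^N = 2*K*c0 + 2*N*c0*γ^N := by
      rw [hP']
      have hcan : 2*K/γ^N*γ^N = 2*K := div_mul_cancel₀ _ hγN0.ne'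
      linear_combination c0 * hcan
    have h2 : 2*K*c0 + 2*(N:ℝ)*c0*γ^N ≤ c * γ^N := by
      have h3 : 2*(N:ℝ)*c0*γ^N ≤ 2*N*c0*(1/4) := by
        apply mul_le_mul_of_nonneg_left hγN4
        positivity
      have h4 : 2*K*c0 = (4*(N:ℝ)+6)*c0 := by rw [hK]; ring
      nlinarith [mul_nonneg (by linarith : (0:ℝ) ≤ (N:ℝ) - 2) hc0]
    have h5 : P * c0 * γ^N ≤ c * γ^N := by rw [hmul]; exact h2
    exact le_of_mul_le_mul_right h5 hγN0
  -- the window contraction and the one-step drift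
  have hwin : ∀ k, 1 ≤ k → D (k + N) ≤ q * D k + K * eps c0 c1 α k := by
    intro k hk
    have := window hF hRobust hN hγ0 hγ hc0 hc1 hα' hP hR hk
    simp only [hD, hq, hK]
    convert this using 2 <;> push_cast <;> ring
  have hstep : ∀ k, 1 ≤ k → D (k+1) ≤ D k + 2 * eps c0 c1 α k := by
    intro k hk
    have h1 := Vf_drift hF hP hR hγ0 hγ1 hc0 hc1 hk
    have h2 := Vf_drift hF (neg_protocol hP) hR hγ0 hγ1 hc0 hc1 hk
    rw [Vf_neg, Vf_neg] at h2
    have hE0 : 0 ≤ eps c0 c1 α k := eps_nonneg hc0 hc1 k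
    have h3 : (1-γ) * eps c0 c1 α k ≤ eps c0 c1 α k := by nlinarith
    simp only [hD]
    linarith
  -- it suffices to bound the limsup by c + δ for every δ > 0
  have hsuff : ∀ δ : ℝ, 0 < δ →
      Filter.limsup (fun k => |x k i - x k j|) Filter.atTop ≤ c + δ := by
    intro δ hδ
    set δ' : ℝ := δ / (2*P) with hδ'def
    have hδ'0 : 0 < δ' := by positivity
    set E' : ℝ := c0 + δ' with hE'def
    have hE'0 : 0 ≤ E' := by positivity
    -- choose k0 with eps ≤ E' from k0 on
    have htend : Filter.Tendsto (fun m : ℕ => c1 * Real.exp (-α * ((m - 1 : ℕ) : ℝ)))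
        Filter.atTop (nhds 0) := by
      have h1 : Filter.Tendsto (fun m : ℕ => ((m - 1 : ℕ) : ℝ)) Filter.atTop Filter.atTop :=
        tendsto_natCast_atTop_atTop.comp (Filter.tendsto_sub_atTop_nat 1)
      have h2 : Filter.Tendsto (fun m : ℕ => α * ((m - 1 : ℕ) : ℝ)) Filter.atTop
          Filter.atTop := h1.const_mul_atTop hα
      have h3 : Filter.Tendsto (fun m : ℕ => -(α * ((m - 1 : ℕ) : ℝ))) Filter.atTop
          Filter.atBot := tendsto_neg_atTop_atBot.comp h2
      have h4 := (Real.tendsto_exp_atBot).comp h3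
      have h5 : (fun m : ℕ => Real.exp (-α * ((m - 1 : ℕ) : ℝ)))
          = fun m : ℕ => Real.exp (-(α * ((m - 1 : ℕ) : ℝ))) := by
        funext m; rw [neg_mul]
      have h6 := h4.const_mul c1
      rw [mul_zero] at h6
      simpa [h5] using h6
    have hev : ∀ᶠ m : ℕ in Filter.atTop, c1 * Real.exp (-α * ((m - 1 : ℕ) : ℝ)) < δ' :=
      htend.eventually (gt_mem_nhds hδ'0)
    obtain ⟨k1, hk1⟩ := Filter.eventually_atTop.1 hev
    set k0 : ℕ := max k1 1 with hk0def
    have hk01 : 1 ≤ k0 := le_max_right _ _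
    have heps' : ∀ m, k0 ≤ m → eps c0 c1 α m ≤ E' := by
      intro m hm
      have := hk1 m (le_trans (le_max_left _ _) hm)
      simp only [eps, hE'def]
      linarith
    -- geometric decay within windows
    set W : ℝ := 2*K*E'/γ^N with hWdef
    have hW0 : 0 ≤ W := by positivity
    have hWrec : q * W + K * E' ≤ W := by
      have h2 : (1 - q) * W = K * E' := by
        simp only [hWdef, hq]
        field_simp
        ring
      linarith [h2]
    have hds : ∀ s, D (k0 + s*N) ≤ q^s * D k0 + W := by
      intro s
      induction s with
      | zero => simpa using by linarith [hW0, hD0 k0]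
      | succ s ih =>
        have hidx : k0 + (s+1)*N = (k0 + s*N) + N := by ring
        have h1 := hwin (k0 + s*N) (by omega)
        have h2 : eps c0 c1 α (k0 + s*N) ≤ E' := heps' _ (by omega)
        have h3 : q * D (k0 + s*N) ≤ q * (q^s * D k0 + W) :=
          mul_le_mul_of_nonneg_left ih hq0
        have h4 : K * eps c0 c1 α (k0 + s*N) ≤ K * E' :=
          mul_le_mul_of_nonneg_left h2 hK0.le
        rw [hidx]
        have hpow : q^(s+1) = q * q^s := by ring
        calc D ((k0 + s*N) + N) ≤ q * D (k0 + s*N) + K * eps c0 c1 α (k0 + s*N) := h1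
          _ ≤ q * (q^s * D k0 + W) + K * E' := by linarith
          _ = q^(s+1) * D k0 + (q * W + K * E') := by rw [hpow]; ring
          _ ≤ q^(s+1) * D k0 + W := by linarith [hWrec]
    -- drift within a window
    have hintra : ∀ s r, r ≤ N → D (k0 + s*N + r) ≤ D (k0 + s*N) + r * (2*E') := by
      intro s r hrN
      induction r with
      | zero => simp
      | succ r ih =>
        have h1 := hstep (k0 + s*N + r) (by omega)
        have h2 : eps c0 c1 α (k0 + s*N + r) ≤ E' := heps' _ (by omega)
        have h3 := ih (by omega)
        have hidx : k0 + s*N + (r+1) = (k0 + s*N + r) + 1 := by ring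
        rw [hidx]
        push_cast
        linarith
    -- choose s0 with q^s0 * D k0 < δ/2
    have htendq : Filter.Tendsto (fun s : ℕ => q^s * D k0) Filter.atTop (nhds 0) := by
      have := (tendsto_pow_atTop_nhds_zero_of_lt_one hq0 hq1).mul_const (D k0)
      rwa [zero_mul] at this
    have hevq : ∀ᶠ s : ℕ in Filter.atTop, q^s * D k0 < δ/2 :=
      htendq.eventually (gt_mem_nhds (by linarith))
    obtain ⟨s0, hs0⟩ := Filter.eventually_atTop.1 hevq
    -- the eventual bound
    have hbound : ∀ k, k0 + s0*N ≤ k → |x k i - x k j| ≤ c + δ := by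
      intro k hk
      obtain ⟨s, r, hs, hrN, hkeq⟩ : ∃ s r, s0 ≤ s ∧ r ≤ N ∧ k = k0 + s*N + r := by
        have hNpos : 0 < N := by omega
        refine ⟨(k - k0)/N, (k - k0) % N, ?_, (Nat.mod_lt _ hNpos).le, ?_⟩
        · rw [Nat.le_div_iff_mul_le hNpos]
          omega
        · have hdm := Nat.div_add_mod (k - k0) N
          rw [Nat.mul_comm] at hdm
          omega
      have h1 := hds s
      have h2 := hintra s r hrN
      have h3 : q^s * D k0 ≤ q^s0 * D k0 :=
        mul_le_mul_of_nonneg_right (pow_le_pow_of_le_one hq0 hq1.le hs) (hD0 k0)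
      have h4 : (r:ℝ) * (2*E') ≤ (N:ℝ) * (2*E') := by
        have : (r:ℝ) ≤ (N:ℝ) := by exact_mod_cast hrN
        nlinarith
      have h5 : D k ≤ q^s0 * D k0 + W + (N:ℝ)*(2*E') := by
        rw [hkeq]
        linarith
      have h6 : W + (N:ℝ)*(2*E') = P * E' := by
        simp only [hWdef, hP']
        field_simp
      have h7 : P * E' = P * c0 + P * δ' := by simp only [hE'def]; ring
      have h8 : P * δ' = δ/2 := by
        simp only [hδ'def]
        field_simp
      have h9 := hs0 s0 le_rfl
      have h10 := habsD k
      calc |x k i - x k j| ≤ D k := h10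
        _ ≤ q^s0 * D k0 + W + (N:ℝ)*(2*E') := h5
        _ = q^s0 * D k0 + P * E' := by rw [← h6]; ring
        _ = q^s0 * D k0 + P * c0 + δ/2 := by rw [h7, h8]; ring
        _ ≤ δ/2 + c + δ/2 := by
            clear_value D q K P W E' δ'
            linarith [h9.le, hPc]
        _ = c + δ := by ring
    have hevb : ∀ᶠ k in Filter.atTop, |x k i - x k j| ≤ c + δ :=
      Filter.eventually_atTop.2 ⟨k0 + s0*N, hbound⟩
    exact Filter.limsup_le_of_le
      (Filter.isCoboundedUnder_le_of_le Filter.atTop (fun k => abs_nonneg _)) hevb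
  by_contra hfin
  push_neg at hfin
  have := hsuff ((Filter.limsup (fun k => |x k i - x k j|) Filter.atTop - c)/2)
    (by linarith)
  linarith

end RemarkOne

/-- Claim of Remark 1: for the variant update rule
`x_i(k+1) = x_i(k) + Σ_{j∈M_i(k)} a_{ij}(k)(x̂_j(k) - x̂_i(k))` with the same MSR
filter, weight conditions and event-triggered broadcast rule as in Protocol 1:
if the graph is `(F+1,F+1)`-robust, `N = |R| ≥ 1`, `c ≥ 0`, and
`c0 ≤ γ^N·c/(8N)`, then `limsup_{k→∞} |x_i(k) - x_j(k)| ≤ c` for all regular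
`i, j ∈ R`, for every behavior of the malicious nodes, all initial values, and all
admissible weight choices. -/
theorem protocolVariant_sufficiency {n F N : ℕ} (Nb : Fin n → Finset (Fin n))
    (R : Finset (Fin n)) (hF : (Finset.univ \ R).card ≤ F)
    (hRobust : IsRobust Nb (F + 1) (F + 1))
    (hN : R.card = N) (hN1 : 1 ≤ N)
    (γ c0 c1 α c : ℝ) (hγ0 : 0 < γ) (hγ : γ ≤ 1 / 2)
    (hc0 : 0 ≤ c0) (hc1 : 0 ≤ c1) (hα : 0 < α) (hc : 0 ≤ c)
    (hc0c : c0 ≤ γ ^ N * c / (8 * N))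
    (x xhat : ℕ → Fin n → ℝ) (a : ℕ → Fin n → Fin n → ℝ)
    (M : ℕ → Fin n → Finset (Fin n))
    (hP : ProtocolVariant F Nb R γ c0 c1 α x xhat a M) :
    ∀ i ∈ R, ∀ j ∈ R,
      Filter.limsup (fun k => |x k i - x k j|) Filter.atTop ≤ c :=
  RemarkOne.main Nb R hF hRobust hN hN1 γ c0 c1 α c hγ0 hγ hc0 hc1 hα hc hc0c x xhat a M hP
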